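/- One-side-regular case of the main bound: Let G be a finite simple bipartite graph with parts L and R, without isolated vertices, such that every vertex of L has degree exactly d (d ≥ 1). Then |I(G)| ≤ Π_{r ∈ R} (2^d + 2^{d(r)} − 1)^{1/d}, where d(r) denotes the degree of the vertex r ∈ R. -/

import Mathlib

open Finset
set_option linter.unusedSectionVars false
set_option maxHeartbeats 1000000
namespace OSR
variable {V : Type*} [Fintype V] [DecidableEq V]

def pc (I : Finset (Finset V)) (T s : Finset V) : ℕ :=
  (I.filter (fun t => t ∩ T = s ∩ T)).card

noncomputable def ent (I : Finset (Finset V)) (T : Finset V) : ℝ :=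
  (I.card : ℝ)⁻¹ * ∑ s ∈ I, (Real.log I.card - Real.log (pc I T s))

lemma pc_pos {I : Finset (Finset V)} {s : Finset V} (hs : s ∈ I) (T : Finset V) :
    0 < pc I T s :=
  Finset.card_pos.2 ⟨s, Finset.mem_filter.2 ⟨hs, rfl⟩⟩

lemma pc_congr {I : Finset (Finset V)} {T s s' : Finset V} (h : s ∩ T = s' ∩ T) :
    pc I T s = pc I T s' := by
  unfold pc; rw [h]

lemma ent_sub (I : Finset (Finset V)) (X Y : Finset V) :
    ent I X - ent I Y =
      (I.card : ℝ)⁻¹ * ∑ s ∈ I, (Real.log (pc I Y s) - Real.log (pc I X s)) := by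
  unfold ent
  rw [← mul_sub, ← Finset.sum_sub_distrib]
  congr 1
  apply Finset.sum_congr rfl
  intro s _
  ring

/-- Gibbs / Jensen inequality for `log`, uniform weights. -/
lemma gibbs {I : Finset (Finset V)} (hne : I.Nonempty) (f : Finset V → ℝ)
    (hf : ∀ s ∈ I, 0 < f s) :
    (I.card : ℝ)⁻¹ * ∑ s ∈ I, Real.log (f s) ≤
      Real.log ((I.card : ℝ)⁻¹ * ∑ s ∈ I, f s) := by
  have hN : (0:ℝ) < I.card := by exact_mod_cast Finset.card_pos.2 hne
  set M : ℝ := (I.card : ℝ)⁻¹ * ∑ s ∈ I, f s with hM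
  have hsum : (0:ℝ) < ∑ s ∈ I, f s := Finset.sum_pos hf hne
  have hMpos : 0 < M := mul_pos (inv_pos.2 hN) hsum
  have key : ∀ s ∈ I, Real.log (f s) ≤ Real.log M + (f s / M - 1) := by
    intro s hs
    have h1 : Real.log (f s / M) ≤ f s / M - 1 :=
      Real.log_le_sub_one_of_pos (div_pos (hf s hs) hMpos)
    have h2 : Real.log (f s / M) = Real.log (f s) - Real.log M :=
      Real.log_div (ne_of_gt (hf s hs)) (ne_of_gt hMpos)
    linarith
  have hs : ∑ s ∈ I, Real.log (f s) ≤ ∑ s ∈ I, (Real.log M + (f s / M - 1)) :=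
    Finset.sum_le_sum key
  have hexp : ∑ s ∈ I, (Real.log M + (f s / M - 1))
      = I.card * Real.log M + (∑ s ∈ I, f s) / M - I.card := by
    rw [Finset.sum_add_distrib, Finset.sum_const, Finset.sum_sub_distrib,
      Finset.sum_const, ← Finset.sum_div]
    ring
  have hfrac : (∑ s ∈ I, f s) / M = I.card := by
    rw [hM]; field_simp
  have : ∑ s ∈ I, Real.log (f s) ≤ I.card * Real.log M := by
    rw [hexp, hfrac] at hs; linarith
  calc (I.card : ℝ)⁻¹ * ∑ s ∈ I, Real.log (f s)
      ≤ (I.card : ℝ)⁻¹ * (I.card * Real.log M) := by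
        apply mul_le_mul_of_nonneg_left this (by positivity)
    _ = Real.log M := by field_simp

lemma ent_univ {I : Finset (Finset V)} (hne : I.Nonempty) :
    ent I Finset.univ = Real.log I.card := by
  have hN : (0:ℝ) < I.card := by exact_mod_cast Finset.card_pos.2 hne
  have h1 : ∀ s ∈ I, pc I Finset.univ s = 1 := by
    intro s hs
    unfold pc
    have : I.filter (fun t => t ∩ Finset.univ = s ∩ Finset.univ) = {s} := by
      ext t
      simp only [Finset.mem_filter, Finset.inter_univ, Finset.mem_singleton]
      constructor
      · rintro ⟨_, h⟩; exact h
      · rintro rfl; exact ⟨hs, rfl⟩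
    rw [this, Finset.card_singleton]
  unfold ent
  rw [Finset.sum_congr rfl (fun s hs => by rw [h1 s hs])]
  simp only [Nat.cast_one, Real.log_one, sub_zero, Finset.sum_const, nsmul_eq_mul]
  field_simp

/-- chain rule over the order induced by an injection `φ : V → ℕ`. -/
lemma chain (I : Finset (Finset V)) (φ : V → ℕ) (hφ : Function.Injective φ)
    (T : Finset V) :
    ent I T = ∑ u ∈ T,
      (ent I (insert u (T ∩ Finset.univ.filter (fun w => φ w < φ u)))
        - ent I (T ∩ Finset.univ.filter (fun w => φ w < φ u))) := by
  set P : V → Finset V := fun u => Finset.univ.filter (fun w => φ w < φ u) with hP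
  induction T using Finset.strongInduction with
  | _ T ih =>
    rcases T.eq_empty_or_nonempty with rfl | hTne
    · simp [ent, pc]
    · obtain ⟨a, haT, hmax⟩ := Finset.exists_max_image T φ hTne
      set S := T.erase a with hS
      have hSss : S ⊂ T := Finset.erase_ssubset haT
      have hTS : T = insert a S := by rw [hS, Finset.insert_erase haT]
      have hTa : T ∩ P a = S := by
        ext x
        simp only [hS, Finset.mem_inter, hP, Finset.mem_filter, Finset.mem_univ,
          true_and, Finset.mem_erase]
        constructor
        · rintro ⟨hx, hlt⟩
          exact ⟨fun h => by subst h; exact lt_irrefl _ hlt, hx⟩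
        · rintro ⟨hne, hx⟩
          exact ⟨hx, lt_of_le_of_ne (hmax x hx) (fun h => hne (hφ h))⟩
      have hTu : ∀ u ∈ S, T ∩ P u = S ∩ P u := by
        intro u hu
        rw [hTS]
        ext x
        simp only [Finset.mem_inter, Finset.mem_insert, hP, Finset.mem_filter,
          Finset.mem_univ, true_and]
        constructor
        · rintro ⟨hx | hx, hlt⟩
          · subst hx
            exact absurd (lt_of_le_of_lt (hmax u (Finset.mem_of_mem_erase hu)) hlt)
              (lt_irrefl _)
          · exact ⟨hx, hlt⟩
        · rintro ⟨hx, hlt⟩; exact ⟨Or.inr hx, hlt⟩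
      have haS : a ∉ S := Finset.notMem_erase a T
      rw [hTS, Finset.sum_insert haS]
      have hrest : ∑ u ∈ S, (ent I (insert u ((insert a S) ∩ P u))
          - ent I ((insert a S) ∩ P u)) = ent I S := by
        have ihS := ih S hSss
        simp only [show ∀ u, Finset.univ.filter (fun w => φ w < φ u) = P u
          from fun u => rfl] at ihS
        rw [ihS]
        symm
        apply Finset.sum_congr rfl
        intro u hu
        rw [← hTS, hTu u hu]
      rw [hrest, ← hTS, hTa, ← hTS]
      ring

/-- The key counting estimate behind "conditioning reduces entropy". -/
lemma count_key (I : Finset (Finset V)) (A B C : Finset V) (hBC : B ⊆ C) :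
    ∑ s ∈ I, ((pc I C s : ℝ) * pc I (A ∪ B) s / (pc I (A ∪ C) s * pc I B s))
      ≤ I.card := by
  classical
  set U := A ∪ C with hU
  have hCU : C ⊆ U := Finset.subset_union_right
  have hBU : B ⊆ U := hBC.trans hCU
  have hABU : A ∪ B ⊆ U := Finset.union_subset_union_right hBC
  -- patterns only depend on `s ∩ U`
  have hpat : ∀ T : Finset V, T ⊆ U → ∀ s : Finset V, pc I T s = pc I T (s ∩ U) := by
    intro T hT s
    apply pc_congr
    rw [Finset.inter_assoc, Finset.inter_eq_right.2 hT]
  set g : Finset V → ℝ :=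
    fun π => (pc I C π : ℝ) * pc I (A ∪ B) π / (pc I U π * pc I B π) with hg
  have step1 : ∑ s ∈ I, ((pc I C s : ℝ) * pc I (A ∪ B) s /
      (pc I (A ∪ C) s * pc I B s)) = ∑ s ∈ I, g (s ∩ U) := by
    apply Finset.sum_congr rfl
    intro s _
    rw [hg]
    simp only [← hU]
    rw [← hpat C hCU s, ← hpat (A ∪ B) hABU s, ← hpat U subset_rfl s,
      ← hpat B hBU s]
  rw [step1, Finset.sum_comp g (fun s => s ∩ U)]
  set im := I.image (fun s => s ∩ U) with him
  have himU : ∀ π ∈ im, π ∩ U = π := by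
    intro π hπ
    obtain ⟨t, _, rfl⟩ := Finset.mem_image.1 hπ
    rw [Finset.inter_assoc, Finset.inter_self]
  have step2 : ∀ π ∈ im, ((I.filter fun s => s ∩ U = π).card) • g π
      = (pc I C π : ℝ) * pc I (A ∪ B) π / pc I B π := by
    intro π hπ
    obtain ⟨t, ht, hteq⟩ := Finset.mem_image.1 hπ
    have hfib : (I.filter fun s => s ∩ U = π).card = pc I U π := by
      unfold pc
      congr 1
      apply Finset.filter_congr
      intro s _
      rw [himU π hπ]
    have hUpos : 0 < pc I U π := by
      rw [← pc_congr (show t ∩ U = π ∩ U by rw [himU π hπ, hteq])]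
      exact pc_pos ht U
    have hBpos : 0 < pc I B π := by
      rw [← pc_congr (show t ∩ B = π ∩ B by
        rw [← hteq, Finset.inter_assoc, Finset.inter_eq_right.2 hBU])]
      exact pc_pos ht B
    rw [hfib, hg, nsmul_eq_mul]
    have h1 : (pc I U π : ℝ) ≠ 0 := by positivity
    have h2 : (pc I B π : ℝ) ≠ 0 := by positivity
    field_simp
  rw [Finset.sum_congr rfl step2]
  -- now fiber over `π ∩ C`
  set Γ := im.image (fun π => π ∩ C) with hΓ
  have hmaps : ∀ π ∈ im, π ∩ C ∈ Γ := fun π hπ => Finset.mem_image_of_mem _ hπ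
  rw [← Finset.sum_fiberwise_of_maps_to hmaps]
  -- per-fiber bound
  have perfiber : ∀ γ ∈ Γ, ∑ π ∈ im.filter (fun π => π ∩ C = γ),
      ((pc I C π : ℝ) * pc I (A ∪ B) π / pc I B π) ≤ (pc I C γ : ℝ) := by
    intro γ hγ
    obtain ⟨π₀, hπ₀, hγeq⟩ := Finset.mem_image.1 hγ
    obtain ⟨t, ht, hteq⟩ := Finset.mem_image.1 hπ₀
    have hγt : γ = t ∩ C := by
      rw [← hγeq, ← hteq, Finset.inter_assoc, Finset.inter_eq_right.2 hCU]
    have hγC : γ ∩ C = γ := by rw [hγt, Finset.inter_assoc, Finset.inter_self]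
    have hγB : γ ∩ B = t ∩ B := by
      rw [hγt, Finset.inter_assoc, Finset.inter_eq_right.2 hBC]
    have hBpos : 0 < pc I B γ := by
      rw [pc_congr hγB]; exact pc_pos ht B
    -- rewrite each term
    have hterm : ∀ π ∈ im.filter (fun π => π ∩ C = γ),
        ((pc I C π : ℝ) * pc I (A ∪ B) π / pc I B π)
          = ((pc I C γ : ℝ) / pc I B γ) * pc I (A ∪ B) π := by
      intro π hπ
      have hπC : π ∩ C = γ := (Finset.mem_filter.1 hπ).2
      have h1 : pc I C π = pc I C γ := pc_congr (by rw [hπC, hγC])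
      have h2 : pc I B π = pc I B γ := pc_congr (by
        calc π ∩ B = (π ∩ C) ∩ B := by
              rw [Finset.inter_assoc, Finset.inter_eq_right.2 hBC]
          _ = (γ ∩ C) ∩ B := by rw [hπC, hγC]
          _ = γ ∩ B := by rw [Finset.inter_assoc, Finset.inter_eq_right.2 hBC])
      rw [h1, h2]; ring
    rw [Finset.sum_congr rfl hterm, ← Finset.mul_sum]
    -- the ℕ-level counting claim
    have claim : ∑ π ∈ im.filter (fun π => π ∩ C = γ), pc I (A ∪ B) π ≤ pc I B γ := by
      set Φ := im.filter (fun π => π ∩ C = γ) with hΦ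
      set F : Finset V → Finset (Finset V) :=
        fun π => I.filter (fun t' => t' ∩ (A ∪ B) = π ∩ (A ∪ B)) with hF
      have hdisj : ∀ π₁ ∈ Φ, ∀ π₂ ∈ Φ, π₁ ≠ π₂ → Disjoint (F π₁) (F π₂) := by
        intro π₁ h₁ π₂ h₂ hne12
        rw [Finset.disjoint_left]
        intro t' ht'1 ht'2
        apply hne12
        have m₁ := Finset.mem_filter.1 h₁
        have m₂ := Finset.mem_filter.1 h₂
        have hsub : ∀ π ∈ im, π ⊆ U := by
          intro π hπ
          obtain ⟨t₁, _, rfl⟩ := Finset.mem_image.1 hπ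
          exact Finset.inter_subset_right
        have hAB : π₁ ∩ (A ∪ B) = π₂ ∩ (A ∪ B) := by
          rw [← (Finset.mem_filter.1 ht'1).2, ← (Finset.mem_filter.1 ht'2).2]
        have hCC : π₁ ∩ C = π₂ ∩ C := by rw [m₁.2, m₂.2]
        have key : ∀ πa πb : Finset V, πa ⊆ U → πb ⊆ U → πa ∩ C = πb ∩ C →
            πa ∩ (A ∪ B) = πb ∩ (A ∪ B) → πa ⊆ πb := by
          intro πa πb ha hb hC hABeq x hx
          rcases Finset.mem_union.1 (ha hx) with hxA | hxC
          · have : x ∈ πa ∩ (A ∪ B) :=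
              Finset.mem_inter.2 ⟨hx, Finset.mem_union_left _ hxA⟩
            rw [hABeq] at this
            exact (Finset.mem_inter.1 this).1
          · have : x ∈ πa ∩ C := Finset.mem_inter.2 ⟨hx, hxC⟩
            rw [hC] at this
            exact (Finset.mem_inter.1 this).1
        exact Finset.Subset.antisymm
          (key π₁ π₂ (hsub _ m₁.1) (hsub _ m₂.1) hCC hAB)
          (key π₂ π₁ (hsub _ m₂.1) (hsub _ m₁.1) hCC.symm hAB.symm)
      have hcard : ∑ π ∈ Φ, (F π).card = (Φ.biUnion F).card :=
        (Finset.card_biUnion hdisj).symm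
      have hsubset : Φ.biUnion F ⊆ I.filter (fun t' => t' ∩ B = γ ∩ B) := by
        intro t' ht'
        obtain ⟨π, hπ, ht'F⟩ := Finset.mem_biUnion.1 ht'
        have hm := Finset.mem_filter.1 ht'F
        refine Finset.mem_filter.2 ⟨hm.1, ?_⟩
        have hπC : π ∩ C = γ := (Finset.mem_filter.1 hπ).2
        have hBsubAB : B ⊆ A ∪ B := Finset.subset_union_right
        calc t' ∩ B = (t' ∩ (A ∪ B)) ∩ B := by
              rw [Finset.inter_assoc, Finset.inter_eq_right.2 hBsubAB]
          _ = (π ∩ (A ∪ B)) ∩ B := by rw [hm.2]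
          _ = π ∩ B := by rw [Finset.inter_assoc, Finset.inter_eq_right.2 hBsubAB]
          _ = (π ∩ C) ∩ B := by rw [Finset.inter_assoc, Finset.inter_eq_right.2 hBC]
          _ = γ ∩ B := by rw [hπC]
      calc ∑ π ∈ Φ, pc I (A ∪ B) π = ∑ π ∈ Φ, (F π).card := rfl
        _ = (Φ.biUnion F).card := hcard
        _ ≤ (I.filter (fun t' => t' ∩ B = γ ∩ B)).card := Finset.card_le_card hsubset
        _ = pc I B γ := rfl
    have hcast : (∑ π ∈ im.filter (fun π => π ∩ C = γ), (pc I (A ∪ B) π : ℝ))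
        ≤ (pc I B γ : ℝ) := by
      push_cast [← Nat.cast_sum]
      exact_mod_cast claim
    calc ((pc I C γ : ℝ) / pc I B γ) * ∑ π ∈ im.filter (fun π => π ∩ C = γ),
          (pc I (A ∪ B) π : ℝ)
        ≤ ((pc I C γ : ℝ) / pc I B γ) * pc I B γ := by
          apply mul_le_mul_of_nonneg_left hcast (by positivity)
      _ = pc I C γ := by
          field_simp
  -- final: sum of pc I C γ over distinct patterns γ is at most |I|
  have final : ∑ γ ∈ Γ, (pc I C γ : ℝ) ≤ I.card := by
    have hnat : ∑ γ ∈ Γ, pc I C γ ≤ I.card := by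
      set Gc : Finset V → Finset (Finset V) :=
        fun γ => I.filter (fun t' => t' ∩ C = γ ∩ C) with hGc
      have hγC : ∀ γ ∈ Γ, γ ∩ C = γ := by
        intro γ hγ
        obtain ⟨π, _, rfl⟩ := Finset.mem_image.1 hγ
        rw [Finset.inter_assoc, Finset.inter_self]
      have hdisj : ∀ γ₁ ∈ Γ, ∀ γ₂ ∈ Γ, γ₁ ≠ γ₂ → Disjoint (Gc γ₁) (Gc γ₂) := by
        intro γ₁ h₁ γ₂ h₂ hne12
        rw [Finset.disjoint_left]
        intro t' ht'1 ht'2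
        apply hne12
        have e1 := (Finset.mem_filter.1 ht'1).2
        have e2 := (Finset.mem_filter.1 ht'2).2
        rw [hγC _ h₁] at e1
        rw [hγC _ h₂] at e2
        rw [← e1, ← e2]
      calc ∑ γ ∈ Γ, pc I C γ = (Γ.biUnion Gc).card := (Finset.card_biUnion hdisj).symm
        _ ≤ I.card := Finset.card_le_card (Finset.biUnion_subset.2
            (fun γ _ => Finset.filter_subset _ _))
    exact_mod_cast hnat
  calc ∑ γ ∈ Γ, ∑ π ∈ im.filter (fun π => π ∩ C = γ),
        ((pc I C π : ℝ) * pc I (A ∪ B) π / pc I B π)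
      ≤ ∑ γ ∈ Γ, (pc I C γ : ℝ) := Finset.sum_le_sum perfiber
    _ ≤ I.card := final


/-- Conditioning on more coordinates reduces conditional entropy. -/
lemma cond_reduce {I : Finset (Finset V)} (hne : I.Nonempty) (A B C : Finset V)
    (hBC : B ⊆ C) :
    ent I (A ∪ C) - ent I C ≤ ent I (A ∪ B) - ent I B := by
  have hN : (0:ℝ) < I.card := by exact_mod_cast Finset.card_pos.2 hne
  set r : Finset V → ℝ := fun s =>
    (pc I C s : ℝ) * pc I (A ∪ B) s / (pc I (A ∪ C) s * pc I B s) with hr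
  have hrpos : ∀ s ∈ I, 0 < r s := by
    intro s hs
    have h1 := pc_pos hs C
    have h2 := pc_pos hs (A ∪ B)
    have h3 := pc_pos hs (A ∪ C)
    have h4 := pc_pos hs B
    rw [hr]
    have c1 : (0:ℝ) < pc I C s := by exact_mod_cast h1
    have c2 : (0:ℝ) < pc I (A ∪ B) s := by exact_mod_cast h2
    have c3 : (0:ℝ) < pc I (A ∪ C) s := by exact_mod_cast h3
    have c4 : (0:ℝ) < pc I B s := by exact_mod_cast h4
    positivity
  have hdiff : (ent I (A ∪ C) - ent I C) - (ent I (A ∪ B) - ent I B)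
      = (I.card : ℝ)⁻¹ * ∑ s ∈ I, Real.log (r s) := by
    rw [ent_sub I (A ∪ C) C, ent_sub I (A ∪ B) B, ← mul_sub,
      ← Finset.sum_sub_distrib]
    congr 1
    apply Finset.sum_congr rfl
    intro s hs
    have c1 : (pc I C s : ℝ) ≠ 0 := by exact_mod_cast (pc_pos hs C).ne'
    have c2 : (pc I (A ∪ B) s : ℝ) ≠ 0 := by exact_mod_cast (pc_pos hs (A ∪ B)).ne'
    have c3 : (pc I (A ∪ C) s : ℝ) ≠ 0 := by exact_mod_cast (pc_pos hs (A ∪ C)).ne'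
    have c4 : (pc I B s : ℝ) ≠ 0 := by exact_mod_cast (pc_pos hs B).ne'
    rw [hr]
    rw [Real.log_div (by positivity) (by positivity), Real.log_mul c1 c2,
      Real.log_mul c3 c4]
    ring
  have hg := gibbs hne r hrpos
  have hle : (I.card : ℝ)⁻¹ * ∑ s ∈ I, r s ≤ 1 := by
    have hck := count_key I A B C hBC
    calc (I.card : ℝ)⁻¹ * ∑ s ∈ I, r s ≤ (I.card : ℝ)⁻¹ * I.card :=
          mul_le_mul_of_nonneg_left hck (by positivity)
      _ = 1 := by field_simp
  have hlog : Real.log ((I.card : ℝ)⁻¹ * ∑ s ∈ I, r s) ≤ 0 :=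
    Real.log_nonpos (by positivity) hle
  linarith

/-- The Gibbs-type per-vertex bound. -/
lemma ent_le (I : Finset (Finset V)) (h0 : ∅ ∈ I) (T : Finset V) (d : ℕ) :
    (d : ℝ) * (((I.filter (fun s => s ∩ T = ∅)).card : ℝ) / I.card) * Real.log 2
      + ent I T ≤ Real.log ((2:ℝ) ^ d + 2 ^ (T.card) - 1) := by
  classical
  have hne : I.Nonempty := ⟨∅, h0⟩
  have hN : (0:ℝ) < I.card := by exact_mod_cast Finset.card_pos.2 hne
  set w : Finset V → ℝ := fun s =>
    (if s ∩ T = ∅ then (2:ℝ)^d else 1) * ((I.card : ℝ) / pc I T s) with hw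
  have hwpos : ∀ s ∈ I, 0 < w s := by
    intro s hs
    have c1 : (0:ℝ) < pc I T s := by exact_mod_cast pc_pos hs T
    rw [hw]
    have : (0:ℝ) < (if s ∩ T = ∅ then (2:ℝ)^d else 1) := by
      split <;> positivity
    positivity
  -- LHS equals the averaged log of w
  have hLHS : (d : ℝ) * (((I.filter (fun s => s ∩ T = ∅)).card : ℝ) / I.card)
        * Real.log 2 + ent I T
      = (I.card : ℝ)⁻¹ * ∑ s ∈ I, Real.log (w s) := by
    have hlogw : ∀ s ∈ I, Real.log (w s)
        = (if s ∩ T = ∅ then (d : ℝ) * Real.log 2 else 0)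
          + (Real.log I.card - Real.log (pc I T s)) := by
      intro s hs
      have c1 : (0:ℝ) < pc I T s := by exact_mod_cast pc_pos hs T
      have hite : (0:ℝ) < (if s ∩ T = ∅ then (2:ℝ)^d else 1) := by
        split <;> positivity
      rw [hw]
      rw [Real.log_mul (ne_of_gt hite) (by positivity),
        Real.log_div (ne_of_gt hN) (ne_of_gt c1)]
      congr 1
      split
      · rw [Real.log_pow]
      · rw [Real.log_one]
    rw [Finset.sum_congr rfl hlogw, Finset.sum_add_distrib]
    rw [Finset.sum_ite, Finset.sum_const, Finset.sum_const, smul_zero, add_zero]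
    unfold ent
    rw [nsmul_eq_mul]
    field_simp
  rw [hLHS]
  have hg := gibbs hne w hwpos
  refine hg.trans ?_
  -- compute the average of w
  set im := I.image (fun s => s ∩ T) with him
  have hcomp : ∑ s ∈ I, w s
      = ∑ π ∈ im, ((I.filter fun s => s ∩ T = π).card) • ((if π = ∅ then (2:ℝ)^d else 1) * ((I.card : ℝ) / pc I T π)) := by
    have hc := Finset.sum_comp (s := I)
      (fun π => (if π = ∅ then (2:ℝ)^d else 1) * ((I.card : ℝ) / pc I T π))
      (fun s : Finset V => s ∩ T)
    rw [← him] at hc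
    rw [← hc]
    apply Finset.sum_congr rfl
    intro s hs
    rw [hw]
    have h1 : pc I T s = pc I T (s ∩ T) :=
      pc_congr (by rw [Finset.inter_assoc, Finset.inter_self])
    simp only [h1]
  have himT : ∀ π ∈ im, π ∩ T = π := by
    intro π hπ
    obtain ⟨t, _, rfl⟩ := Finset.mem_image.1 hπ
    rw [Finset.inter_assoc, Finset.inter_self]
  have hterm : ∀ π ∈ im, ((I.filter fun s => s ∩ T = π).card)
        • ((if π = ∅ then (2:ℝ)^d else 1) * ((I.card : ℝ) / pc I T π))
      = (I.card : ℝ) * (if π = ∅ then (2:ℝ)^d else 1) := by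
    intro π hπ
    obtain ⟨t, ht, hteq⟩ := Finset.mem_image.1 hπ
    have hfib : (I.filter fun s => s ∩ T = π).card = pc I T π := by
      unfold pc
      congr 1
      apply Finset.filter_congr
      intro s _
      rw [himT π hπ]
    have hpos : 0 < pc I T π := by
      rw [← pc_congr (show t ∩ T = π ∩ T by rw [himT π hπ, hteq])]
      exact pc_pos ht T
    have hpos' : (0:ℝ) < pc I T π := by exact_mod_cast hpos
    rw [hfib, nsmul_eq_mul]
    field_simp
  have h0im : ∅ ∈ im := by
    refine Finset.mem_image.2 ⟨∅, h0, by simp⟩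
  have hsum2 : ∑ π ∈ im, (if π = ∅ then (2:ℝ)^d else 1)
      ≤ (2:ℝ)^d + 2 ^ (T.card) - 1 := by
    rw [← Finset.add_sum_erase _ _ h0im]
    have h00 : (if (∅ : Finset V) = ∅ then (2:ℝ)^d else 1) = (2:ℝ)^d := by simp
    rw [h00]
    have hrest : ∑ π ∈ im.erase ∅, (if π = ∅ then (2:ℝ)^d else 1)
        = ((im.erase ∅).card : ℝ) := by
      rw [Finset.sum_congr rfl (fun π hπ => if_neg (Finset.ne_of_mem_erase hπ)),
        Finset.sum_const, nsmul_eq_mul, mul_one]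
    rw [hrest]
    have hsub : im ⊆ T.powerset := by
      intro π hπ
      obtain ⟨t, _, rfl⟩ := Finset.mem_image.1 hπ
      exact Finset.mem_powerset.2 Finset.inter_subset_right
    have hcard : im.card ≤ 2 ^ T.card := by
      calc im.card ≤ T.powerset.card := Finset.card_le_card hsub
        _ = 2 ^ T.card := Finset.card_powerset T
    have herase : (im.erase ∅).card = im.card - 1 := Finset.card_erase_of_mem h0im
    have h1le : 1 ≤ im.card := Finset.card_pos.2 ⟨∅, h0im⟩
    have : ((im.erase ∅).card : ℝ) ≤ (2:ℝ) ^ T.card - 1 := by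
      rw [herase]
      have : (im.card - 1 : ℕ) ≤ 2 ^ T.card - 1 := by omega
      calc ((im.card - 1 : ℕ) : ℝ) ≤ ((2 ^ T.card - 1 : ℕ) : ℝ) := by exact_mod_cast this
        _ = (2:ℝ) ^ T.card - 1 := by
            push_cast [Nat.cast_sub (Nat.one_le_two_pow)]
            ring
    linarith
  have havg : (I.card : ℝ)⁻¹ * ∑ s ∈ I, w s
      = ∑ π ∈ im, (if π = ∅ then (2:ℝ)^d else 1) := by
    rw [hcomp, Finset.sum_congr rfl hterm, ← Finset.mul_sum]
    field_simp
  rw [havg]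
  have hposavg : (0:ℝ) < ∑ π ∈ im, (if π = ∅ then (2:ℝ)^d else 1) := by
    apply Finset.sum_pos
    · intro π _; split <;> positivity
    · exact ⟨∅, h0im⟩
  exact Real.log_le_log hposavg hsum2

section Graph
variable (G : SimpleGraph V) [DecidableRel G.Adj]

def iFin : Finset (Finset V) :=
  Finset.univ.filter (fun s => ∀ u ∈ s, ∀ w ∈ s, ¬ G.Adj u w)

lemma mem_iFin {s : Finset V} : s ∈ iFin G ↔ ∀ u ∈ s, ∀ w ∈ s, ¬ G.Adj u w := by
  simp [iFin]

lemma empty_mem_iFin : ∅ ∈ iFin G := by simp [iFin]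

/-- conditional entropy of a vertex given its neighborhood is at most `q log 2`. -/
lemma cond_v (v : V) :
    ent (iFin G) (insert v (G.neighborFinset v)) - ent (iFin G) (G.neighborFinset v)
      ≤ (((iFin G).filter (fun s => s ∩ G.neighborFinset v = ∅)).card : ℝ)
          / (iFin G).card * Real.log 2 := by
  classical
  set I := iFin G with hIdef
  set Nv := G.neighborFinset v with hNv
  set M := insert v Nv with hM
  have hvNv : v ∉ Nv := by
    rw [hNv]; exact G.notMem_neighborFinset_self v
  have hne : I.Nonempty := ⟨∅, empty_mem_iFin G⟩
  have hN : (0:ℝ) < I.card := by exact_mod_cast Finset.card_pos.2 hne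
  -- if `t` is independent and meets `Nv` then `v ∉ t`
  have hnomem : ∀ t ∈ I, t ∩ Nv ≠ ∅ → v ∉ t := by
    intro t ht hint hvt
    obtain ⟨u, hu⟩ := Finset.nonempty_iff_ne_empty.2 hint
    have hu' := Finset.mem_inter.1 hu
    have hadj : G.Adj v u := by
      have := hu'.2
      rw [hNv] at this
      exact (SimpleGraph.mem_neighborFinset G v u).1 this
    exact ((mem_iFin G).1 ht) v hvt u hu'.1 hadj
  rw [ent_sub]
  rw [← Finset.sum_filter_add_sum_filter_not I (fun s => s ∩ Nv = ∅)]
  -- second part vanishes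
  have hzero : ∑ s ∈ I.filter (fun s => ¬ s ∩ Nv = ∅),
      (Real.log (pc I Nv s) - Real.log (pc I M s)) = 0 := by
    apply Finset.sum_eq_zero
    intro s hs
    have hsI := (Finset.mem_filter.1 hs).1
    have hsne : s ∩ Nv ≠ ∅ := (Finset.mem_filter.1 hs).2
    have hpc : pc I M s = pc I Nv s := by
      unfold pc
      congr 1
      apply Finset.filter_congr
      intro t htI
      constructor
      · intro h
        have hNvM : Nv ⊆ M := Finset.subset_insert v Nv
        calc t ∩ Nv = (t ∩ M) ∩ Nv := by
              rw [Finset.inter_assoc, Finset.inter_eq_right.2 hNvM]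
          _ = (s ∩ M) ∩ Nv := by rw [h]
          _ = s ∩ Nv := by rw [Finset.inter_assoc, Finset.inter_eq_right.2 hNvM]
      · intro h
        have hvt : v ∉ t := hnomem t htI (by rw [h]; exact hsne)
        have hvs : v ∉ s := hnomem s hsI hsne
        ext x
        simp only [hM, Finset.mem_inter, Finset.mem_insert]
        constructor
        · rintro ⟨hxt, rfl | hxNv⟩
          · exact absurd hxt hvt
          · have : x ∈ s ∩ Nv := by rw [← h]; exact Finset.mem_inter.2 ⟨hxt, hxNv⟩
            exact ⟨(Finset.mem_inter.1 this).1, Or.inr hxNv⟩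
        · rintro ⟨hxs, rfl | hxNv⟩
          · exact absurd hxs hvs
          · have : x ∈ t ∩ Nv := by rw [h]; exact Finset.mem_inter.2 ⟨hxs, hxNv⟩
            exact ⟨(Finset.mem_inter.1 this).1, Or.inr hxNv⟩
    rw [hpc]
    ring
  rw [hzero, add_zero]
  -- first part: each term is at most log 2
  have hbound : ∀ s ∈ I.filter (fun s => s ∩ Nv = ∅),
      (Real.log (pc I Nv s) - Real.log (pc I M s)) ≤ Real.log 2 := by
    intro s hs
    have hsI := (Finset.mem_filter.1 hs).1
    have hsempty : s ∩ Nv = ∅ := (Finset.mem_filter.1 hs).2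
    -- counting: pc I Nv s ≤ 2 * pc I M s
    have hcount : pc I Nv s ≤ 2 * pc I M s := by
      have hA0 : pc I Nv s = (I.filter (fun t => t ∩ Nv = ∅)).card := by
        unfold pc
        congr 1
        apply Finset.filter_congr
        intro t _
        rw [hsempty]
      set A0 := I.filter (fun t => t ∩ Nv = ∅) with hA0def
      set p : Finset V → Prop := fun t => (v ∈ t ↔ v ∈ s) with hp
      have hsplit : (A0.filter p).card + (A0.filter (fun t => ¬ p t)).card = A0.card :=
        Finset.card_filter_add_card_filter_not p
      have hmatch : A0.filter p = I.filter (fun t => t ∩ M = s ∩ M) := by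
        ext t
        constructor
        · intro h
          have h1 := Finset.mem_filter.1 h
          have h2 := Finset.mem_filter.1 h1.1
          have htI := h2.1
          have htNv : t ∩ Nv = ∅ := h2.2
          have hiff : v ∈ t ↔ v ∈ s := h1.2
          refine Finset.mem_filter.2 ⟨htI, ?_⟩
          ext x
          simp only [hM, Finset.mem_inter, Finset.mem_insert]
          constructor
          · rintro ⟨hxt, rfl | hxNv⟩
            · exact ⟨hiff.1 hxt, Or.inl rfl⟩
            · exact absurd (Finset.mem_inter.2 ⟨hxt, hxNv⟩)
                (by rw [htNv]; exact Finset.notMem_empty x)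
          · rintro ⟨hxs, rfl | hxNv⟩
            · exact ⟨hiff.2 hxs, Or.inl rfl⟩
            · exact absurd (Finset.mem_inter.2 ⟨hxs, hxNv⟩)
                (by rw [hsempty]; exact Finset.notMem_empty x)
        · intro h
          have h1 := Finset.mem_filter.1 h
          have htI := h1.1
          have hEq : t ∩ M = s ∩ M := h1.2
          have hNvM : Nv ⊆ M := Finset.subset_insert v Nv
          have htNv : t ∩ Nv = ∅ := by
            calc t ∩ Nv = (t ∩ M) ∩ Nv := by
                  rw [Finset.inter_assoc, Finset.inter_eq_right.2 hNvM]
              _ = (s ∩ M) ∩ Nv := by rw [hEq]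
              _ = s ∩ Nv := by rw [Finset.inter_assoc, Finset.inter_eq_right.2 hNvM]
              _ = ∅ := hsempty
          have hvM : v ∈ M := Finset.mem_insert_self v Nv
          refine Finset.mem_filter.2 ⟨Finset.mem_filter.2 ⟨htI, htNv⟩, ?_⟩
          show v ∈ t ↔ v ∈ s
          constructor
          · intro hvt
            have hx : v ∈ t ∩ M := Finset.mem_inter.2 ⟨hvt, hvM⟩
            rw [hEq] at hx
            exact (Finset.mem_inter.1 hx).1
          · intro hvs
            have hx : v ∈ s ∩ M := Finset.mem_inter.2 ⟨hvs, hvM⟩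
            rw [← hEq] at hx
            exact (Finset.mem_inter.1 hx).1
      have hpcM : pc I M s = (A0.filter p).card := by rw [hmatch]; rfl
      -- injection from non-matching to matching via toggling v
      have hinj : (A0.filter (fun t => ¬ p t)).card ≤ (A0.filter p).card := by
        apply Finset.card_le_card_of_injOn
          (fun t => if v ∈ t then t.erase v else insert v t)
        · intro t ht
          have htm := Finset.mem_filter.1 ht
          have htA0 := Finset.mem_filter.1 htm.1
          have htI := htA0.1
          have htNv : t ∩ Nv = ∅ := htA0.2
          have hnp : ¬ (v ∈ t ↔ v ∈ s) := htm.2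
          have htog : (if v ∈ t then t.erase v else insert v t) ∈ I := by
            split
            · next hvt =>
              rw [mem_iFin]
              intro a ha b hb
              exact (mem_iFin G).1 htI a (Finset.mem_of_mem_erase ha)
                b (Finset.mem_of_mem_erase hb)
            · next hvt =>
              rw [mem_iFin]
              intro a ha b hb hadj
              rcases Finset.mem_insert.1 ha with rfl | ha'
              · rcases Finset.mem_insert.1 hb with rfl | hb'
                · exact (G.loopless.irrefl _) hadj
                · have hbNv : b ∈ Nv := by
                    rw [hNv]; exact (SimpleGraph.mem_neighborFinset G _ b).2 hadj
                  exact absurd (Finset.mem_inter.2 ⟨hb', hbNv⟩)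
                    (by rw [htNv]; exact Finset.notMem_empty b)
              · rcases Finset.mem_insert.1 hb with rfl | hb'
                · have haNv : a ∈ Nv := by
                    rw [hNv]
                    exact (SimpleGraph.mem_neighborFinset G _ a).2 hadj.symm
                  exact absurd (Finset.mem_inter.2 ⟨ha', haNv⟩)
                    (by rw [htNv]; exact Finset.notMem_empty a)
                · exact (mem_iFin G).1 htI a ha' b hb' hadj
          have htogNv : (if v ∈ t then t.erase v else insert v t) ∩ Nv = ∅ := by
            split
            · apply Finset.subset_empty.1
              calc (t.erase v) ∩ Nv ⊆ t ∩ Nv :=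
                    Finset.inter_subset_inter (Finset.erase_subset v t) subset_rfl
                _ ⊆ ∅ := by rw [htNv]
            · ext x
              simp only [Finset.mem_inter, Finset.mem_insert, Finset.notMem_empty,
                iff_false, not_and]
              rintro (rfl | hxt)
              · exact fun h => hvNv h
              · intro hxNv
                exact absurd (Finset.mem_inter.2 ⟨hxt, hxNv⟩)
                  (by rw [htNv]; exact Finset.notMem_empty x)
          have htogp : p (if v ∈ t then t.erase v else insert v t) := by
            rw [hp]
            by_cases hvt : v ∈ t
            · rw [if_pos hvt]
              simp only [Finset.notMem_erase v t, false_iff]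
              intro hvs
              exact hnp ⟨fun _ => hvs, fun _ => hvt⟩
            · rw [if_neg hvt]
              simp only [Finset.mem_insert_self, true_iff]
              by_contra hvs
              exact hnp ⟨fun h => absurd h hvt, fun h => absurd h hvs⟩
          exact Finset.mem_filter.2 ⟨Finset.mem_filter.2 ⟨htog, htogNv⟩, htogp⟩
        · intro t₁ h₁ t₂ h₂ heq
          dsimp only at heq
          have hm₁ := Finset.mem_coe.1 h₁
          have hm₂ := Finset.mem_coe.1 h₂
          have hnp₁ : ¬ (v ∈ t₁ ↔ v ∈ s) := (Finset.mem_filter.1 hm₁).2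
          have hnp₂ : ¬ (v ∈ t₂ ↔ v ∈ s) := (Finset.mem_filter.1 hm₂).2
          by_cases hvs : v ∈ s
          · have hv₁ : v ∉ t₁ := fun h => hnp₁ ⟨fun _ => hvs, fun _ => h⟩
            have hv₂ : v ∉ t₂ := fun h => hnp₂ ⟨fun _ => hvs, fun _ => h⟩
            rw [if_neg hv₁, if_neg hv₂] at heq
            have := congrArg (Finset.erase · v) heq
            simpa [Finset.erase_insert hv₁, Finset.erase_insert hv₂] using this
          · have hv₁ : v ∈ t₁ := by
              by_contra h
              exact hnp₁ ⟨fun h' => absurd h' h, fun h' => absurd h' hvs⟩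
            have hv₂ : v ∈ t₂ := by
              by_contra h
              exact hnp₂ ⟨fun h' => absurd h' h, fun h' => absurd h' hvs⟩
            rw [if_pos hv₁, if_pos hv₂] at heq
            have := congrArg (insert v) heq
            simpa [Finset.insert_erase hv₁, Finset.insert_erase hv₂] using this
      calc pc I Nv s = A0.card := hA0
        _ = (A0.filter p).card + (A0.filter (fun t => ¬ p t)).card := hsplit.symm
        _ ≤ (A0.filter p).card + (A0.filter p).card := by omega
        _ = 2 * pc I M s := by rw [hpcM]; ring
    have hMpos : (0:ℝ) < pc I M s := by exact_mod_cast pc_pos hsI M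
    have hNvpos : (0:ℝ) < pc I Nv s := by exact_mod_cast pc_pos hsI Nv
    have : Real.log (pc I Nv s) ≤ Real.log (2 * pc I M s) := by
      apply Real.log_le_log hNvpos
      exact_mod_cast hcount
    rw [Real.log_mul (by norm_num) (ne_of_gt hMpos)] at this
    linarith
  have hsum : ∑ s ∈ I.filter (fun s => s ∩ Nv = ∅),
      (Real.log (pc I Nv s) - Real.log (pc I M s))
      ≤ ((I.filter (fun s => s ∩ Nv = ∅)).card : ℝ) * Real.log 2 := by
    calc ∑ s ∈ I.filter (fun s => s ∩ Nv = ∅),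
          (Real.log (pc I Nv s) - Real.log (pc I M s))
        ≤ (I.filter (fun s => s ∩ Nv = ∅)).card • Real.log 2 :=
          Finset.sum_le_card_nsmul _ _ _ hbound
      _ = ((I.filter (fun s => s ∩ Nv = ∅)).card : ℝ) * Real.log 2 := by
          rw [nsmul_eq_mul]
  calc (I.card : ℝ)⁻¹ * ∑ s ∈ I.filter (fun s => s ∩ Nv = ∅),
        (Real.log (pc I Nv s) - Real.log (pc I M s))
      ≤ (I.card : ℝ)⁻¹ * (((I.filter (fun s => s ∩ Nv = ∅)).card : ℝ) * Real.log 2) :=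
        mul_le_mul_of_nonneg_left hsum (by positivity)
    _ = ((I.filter (fun s => s ∩ Nv = ∅)).card : ℝ) / I.card * Real.log 2 := by
        ring

end Graph
end OSR



open Finset

/-- The number of independent sets of a graph `G` (a set of vertices no two of which
are adjacent; the empty set counts). -/
noncomputable def numIndep {V : Type*} (G : SimpleGraph V) : ℕ :=
  Nat.card {s : Finset V // ∀ u ∈ s, ∀ v ∈ s, ¬ G.Adj u v}

/-- **One-side-regular case of the main bound.** Let `G` be a finite simple bipartite
graph with parts `L` and `R`, without isolated vertices, such that every vertex of `L`
has degree exactly `d` (`d ≥ 1`). Then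
`|I(G)| ≤ ∏_{r ∈ R} (2^d + 2^(d(r)) - 1)^(1/d)`. -/
theorem one_side_regular_bound {V : Type*} [Fintype V] [DecidableEq V]
    (G : SimpleGraph V) [DecidableRel G.Adj] (L R : Finset V)
    (hdisj : Disjoint L R) (hunion : L ∪ R = Finset.univ)
    (hbip : ∀ u v, G.Adj u v → (u ∈ L ∧ v ∈ R) ∨ (u ∈ R ∧ v ∈ L))
    (hiso : ∀ v : V, 0 < G.degree v)
    (d : ℕ) (hd : 1 ≤ d) (hreg : ∀ l ∈ L, G.degree l = d) :
    (numIndep G : ℝ) ≤ ∏ r ∈ R, ((2 : ℝ) ^ d + 2 ^ (G.degree r) - 1) ^ (1 / (d : ℝ)) := by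
  classical
  set I := OSR.iFin G with hI
  have h0 : ∅ ∈ I := OSR.empty_mem_iFin G
  have hne : I.Nonempty := ⟨∅, h0⟩
  have hNpos : (0:ℝ) < I.card := by exact_mod_cast Finset.card_pos.2 hne
  have hcard : numIndep G = I.card := by
    rw [numIndep, Nat.card_eq_fintype_card, Fintype.card_subtype]
    rw [hI]
    rfl
  -- linear order: L before R
  set n := Fintype.card V with hn
  set e := Fintype.equivFin V with he
  set φ : V → ℕ := fun x => (if x ∈ L then 0 else n) + (e x : ℕ) with hφdef
  have hlt : ∀ x : V, ((e x) : ℕ) < n := fun x => (e x).2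
  have hφ : Function.Injective φ := by
    intro a b h
    rw [hφdef] at h
    by_cases ha : a ∈ L <;> by_cases hb : b ∈ L <;>
      simp only [ha, hb, if_pos, if_neg, if_true, if_false, not_false_iff] at h
    · exact e.injective (Fin.val_injective (by omega))
    · exact absurd h (by have := hlt a; omega)
    · exact absurd h (by have := hlt b; omega)
    · exact e.injective (Fin.val_injective (by omega))
  have hPL : ∀ u ∈ L, (Finset.univ.filter (fun w => φ w < φ u)) ⊆ L := by
    intro u hu w hw
    have hww := (Finset.mem_filter.1 hw).2
    by_contra hwL
    rw [hφdef] at hww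
    simp only [hu, hwL, if_pos, if_neg, if_true, if_false, not_false_iff] at hww
    have := hlt u
    omega
  have hLltR : ∀ u ∈ L, ∀ r ∈ R, φ u < φ r := by
    intro u hu r hr
    have hrL : r ∉ L := fun h => (Finset.disjoint_left.1 hdisj h) hr
    rw [hφdef]
    simp only [hu, hrL, if_pos, if_neg, if_true, if_false, not_false_iff]
    have := hlt u
    omega
  have hNvL : ∀ v ∈ R, G.neighborFinset v ⊆ L := by
    intro v hv u hu
    have hadj : G.Adj v u := (SimpleGraph.mem_neighborFinset G v u).1 hu
    rcases hbip v u hadj with ⟨hvL, _⟩ | ⟨_, huL⟩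
    · exact absurd hv (Finset.disjoint_left.1 hdisj hvL)
    · exact huL
  have hNvP : ∀ v ∈ R, G.neighborFinset v ⊆ Finset.univ.filter (fun w => φ w < φ v) := by
    intro v hv u hu
    exact Finset.mem_filter.2 ⟨Finset.mem_univ u, hLltR u (hNvL v hv hu) v hv⟩
  -- the chain-rule summand
  set f : V → ℝ := fun u =>
    OSR.ent I (insert u (Finset.univ.filter (fun w => φ w < φ u)))
      - OSR.ent I (Finset.univ.filter (fun w => φ w < φ u)) with hf
  have chainU : OSR.ent I Finset.univ = ∑ u ∈ (Finset.univ : Finset V), f u := by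
    have hch := OSR.chain I φ hφ Finset.univ
    rw [hch]
    apply Finset.sum_congr rfl
    intro u _
    rw [hf]
    rw [Finset.univ_inter]
  have hsplitU : ∑ u ∈ (Finset.univ : Finset V), f u = ∑ u ∈ L, f u + ∑ v ∈ R, f v := by
    rw [← hunion, Finset.sum_union hdisj]
  have hLpart : ∑ u ∈ L, f u = OSR.ent I L := by
    rw [OSR.chain I φ hφ L]
    apply Finset.sum_congr rfl
    intro u hu
    rw [hf, Finset.inter_eq_right.2 (hPL u hu)]
  -- per-vertex conditional entropy bound on the R side
  set q : V → ℝ := fun v =>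
    ((I.filter (fun s => s ∩ G.neighborFinset v = ∅)).card : ℝ) / I.card with hq
  have hRpart : ∀ v ∈ R, f v ≤ q v * Real.log 2 := by
    intro v hv
    have h1 := OSR.cond_reduce hne {v} (G.neighborFinset v)
      (Finset.univ.filter (fun w => φ w < φ v)) (hNvP v hv)
    rw [← Finset.insert_eq, ← Finset.insert_eq] at h1
    have h2 := OSR.cond_v G v
    rw [hf, hq]
    exact le_trans h1 h2
  -- Shearer-type inequality
  set g : V → ℝ := fun u =>
    OSR.ent I (insert u (L ∩ Finset.univ.filter (fun w => φ w < φ u)))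
      - OSR.ent I (L ∩ Finset.univ.filter (fun w => φ w < φ u)) with hg
  have hgL : ∑ u ∈ L, g u = OSR.ent I L := (OSR.chain I φ hφ L).symm
  have perv : ∀ v ∈ R, ∑ u ∈ G.neighborFinset v, g u
      ≤ OSR.ent I (G.neighborFinset v) := by
    intro v hv
    rw [OSR.chain I φ hφ (G.neighborFinset v)]
    apply Finset.sum_le_sum
    intro u hu
    have hsub : G.neighborFinset v ∩ Finset.univ.filter (fun w => φ w < φ u)
        ⊆ L ∩ Finset.univ.filter (fun w => φ w < φ u) :=
      Finset.inter_subset_inter (hNvL v hv) subset_rfl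
    have h1 := OSR.cond_reduce hne {u}
      (G.neighborFinset v ∩ Finset.univ.filter (fun w => φ w < φ u))
      (L ∩ Finset.univ.filter (fun w => φ w < φ u)) hsub
    rw [← Finset.insert_eq, ← Finset.insert_eq] at h1
    exact h1
  have hNvfilter : ∀ v ∈ R, G.neighborFinset v = L.filter (fun u => G.Adj v u) := by
    intro v hv
    ext u
    simp only [SimpleGraph.mem_neighborFinset, Finset.mem_filter]
    constructor
    · intro h
      exact ⟨hNvL v hv ((SimpleGraph.mem_neighborFinset G v u).2 h), h⟩
    · exact fun h => h.2
  have hRfilter : ∀ u ∈ L, R.filter (fun v => G.Adj v u) = G.neighborFinset u := by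
    intro u hu
    ext w
    simp only [Finset.mem_filter, SimpleGraph.mem_neighborFinset]
    constructor
    · exact fun h => h.2.symm
    · intro h
      refine ⟨?_, h.symm⟩
      rcases hbip u w h with ⟨_, hwR⟩ | ⟨huR, _⟩
      · exact hwR
      · exact absurd hu (Finset.disjoint_left.1 hdisj.symm huR)
  have hdouble : ∑ v ∈ R, ∑ u ∈ G.neighborFinset v, g u = (d:ℝ) * ∑ u ∈ L, g u := by
    have step1 : ∀ v ∈ R, ∑ u ∈ G.neighborFinset v, g u
        = ∑ u ∈ L, (if G.Adj v u then g u else 0) := by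
      intro v hv
      rw [hNvfilter v hv, Finset.sum_filter]
    rw [Finset.sum_congr rfl step1, Finset.sum_comm]
    have step2 : ∀ u ∈ L, ∑ v ∈ R, (if G.Adj v u then g u else 0) = (d:ℝ) * g u := by
      intro u hu
      rw [← Finset.sum_filter, Finset.sum_const, hRfilter u hu,
        G.card_neighborFinset_eq_degree, hreg u hu, nsmul_eq_mul]
    rw [Finset.sum_congr rfl step2, ← Finset.mul_sum]
  have hShear : (d:ℝ) * OSR.ent I L ≤ ∑ v ∈ R, OSR.ent I (G.neighborFinset v) := by
    calc (d:ℝ) * OSR.ent I L = (d:ℝ) * ∑ u ∈ L, g u := by rw [hgL]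
      _ = ∑ v ∈ R, ∑ u ∈ G.neighborFinset v, g u := hdouble.symm
      _ ≤ ∑ v ∈ R, OSR.ent I (G.neighborFinset v) := Finset.sum_le_sum perv
  -- per-vertex Gibbs bound
  have hperv : ∀ v ∈ R, (d:ℝ) * q v * Real.log 2 + OSR.ent I (G.neighborFinset v)
      ≤ Real.log ((2:ℝ)^d + 2^(G.degree v) - 1) := by
    intro v _
    have h1 := OSR.ent_le I h0 (G.neighborFinset v) d
    rwa [G.card_neighborFinset_eq_degree v] at h1
  -- combine everything
  have hd0 : (0:ℝ) < d := by exact_mod_cast hd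
  have main : Real.log I.card
      ≤ ∑ v ∈ R, (1/(d:ℝ)) * Real.log ((2:ℝ)^d + 2^(G.degree v) - 1) := by
    have e1 : Real.log I.card = OSR.ent I L + ∑ v ∈ R, f v := by
      rw [← OSR.ent_univ hne, chainU, hsplitU, hLpart]
    have e2 : OSR.ent I L ≤ (1/(d:ℝ)) * ∑ v ∈ R, OSR.ent I (G.neighborFinset v) := by
      have hmul := mul_le_mul_of_nonneg_left hShear
        (le_of_lt (show (0:ℝ) < 1/(d:ℝ) by positivity))
      calc OSR.ent I L = (1/(d:ℝ)) * ((d:ℝ) * OSR.ent I L) := by field_simp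
        _ ≤ (1/(d:ℝ)) * ∑ v ∈ R, OSR.ent I (G.neighborFinset v) := hmul
    have e3 : ∑ v ∈ R, f v ≤ ∑ v ∈ R, q v * Real.log 2 := Finset.sum_le_sum hRpart
    calc Real.log I.card = OSR.ent I L + ∑ v ∈ R, f v := e1
      _ ≤ (1/(d:ℝ)) * ∑ v ∈ R, OSR.ent I (G.neighborFinset v)
            + ∑ v ∈ R, q v * Real.log 2 := add_le_add e2 e3
      _ = ∑ v ∈ R, ((1/(d:ℝ)) * OSR.ent I (G.neighborFinset v) + q v * Real.log 2) := by
          rw [Finset.mul_sum, Finset.sum_add_distrib]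
      _ = ∑ v ∈ R, (1/(d:ℝ)) * ((d:ℝ) * q v * Real.log 2
            + OSR.ent I (G.neighborFinset v)) := by
          apply Finset.sum_congr rfl
          intro v _
          field_simp
          ring
      _ ≤ ∑ v ∈ R, (1/(d:ℝ)) * Real.log ((2:ℝ)^d + 2^(G.degree v) - 1) := by
          apply Finset.sum_le_sum
          intro v hv
          exact mul_le_mul_of_nonneg_left (hperv v hv) (by positivity)
  have hprod : ∏ r ∈ R, ((2:ℝ)^d + 2^(G.degree r) - 1) ^ (1/(d:ℝ))
      = Real.exp (∑ r ∈ R, (1/(d:ℝ)) * Real.log ((2:ℝ)^d + 2^(G.degree r) - 1)) := by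
    rw [Real.exp_sum]
    apply Finset.prod_congr rfl
    intro r _
    have h2d : (1:ℝ) ≤ 2^(G.degree r) := by
      have h := Nat.one_le_two_pow (n := G.degree r)
      exact_mod_cast h
    have h2d' : (0:ℝ) < 2^d := by positivity
    have hc : (0:ℝ) < (2:ℝ)^d + 2^(G.degree r) - 1 := by linarith
    rw [Real.rpow_def_of_pos hc, mul_comm]
  calc (numIndep G : ℝ) = (I.card : ℝ) := by rw [hcard]
    _ = Real.exp (Real.log I.card) := (Real.exp_log hNpos).symm
    _ ≤ Real.exp (∑ v ∈ R, (1/(d:ℝ)) * Real.log ((2:ℝ)^d + 2^(G.degree v) - 1)) :=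
        Real.exp_le_exp.2 main
    _ = ∏ r ∈ R, ((2:ℝ)^d + 2^(G.degree r) - 1) ^ (1/(d:ℝ)) := hprod.symm
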